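/- If a finite bipartite graph has a unique perfect matching, then it has two pendant vertices (vertices of degree one) lying in different color classes of the bipartition. -/

import Mathlib

open SimpleGraph

variable {V : Type*}

/-- A closed walk is an `M`-alternating cycle: it is a cycle and its edges alternate
(cyclically) between `M` and the complement of `M`. -/
def SimpleGraph.IsAltCycle (G : SimpleGraph V) (M : Set (Sym2 V)) {v : V} (c : G.Walk v v) :
    Prop :=
  c.IsCycle ∧ List.Chain' (fun e f => (e ∈ M ↔ f ∉ M)) c.edges ∧
    ∀ e f, c.edges.head? = some e → c.edges.getLast? = some f → (f ∈ M ↔ e ∉ M)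

/-- `S` is a forcing set of the perfect matching `M`: `S ⊆ M` and `M` is the unique
perfect matching of `G` containing `S`. -/
def SimpleGraph.IsForcingSet (G : SimpleGraph V) (M : G.Subgraph) (S : Set (Sym2 V)) : Prop :=
  S ⊆ M.edgeSet ∧ ∀ N : G.Subgraph, N.IsPerfectMatching → S ⊆ N.edgeSet → N = M

/-- `S` is an anti-forcing set of the perfect matching `M`: `S` consists of edges of `G`
not in `M`, and `M` is the unique perfect matching of `G - S` (equivalently, the unique
perfect matching of `G` whose edge set avoids `S`). -/
def SimpleGraph.IsAntiForcingSet (G : SimpleGraph V) (M : G.Subgraph) (S : Set (Sym2 V)) :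
    Prop :=
  S ⊆ G.edgeSet \ M.edgeSet ∧
    ∀ N : G.Subgraph, N.IsPerfectMatching → Disjoint N.edgeSet S → N = M

/-- The forcing number `f(G,M)`. -/
noncomputable def SimpleGraph.forcingNum (G : SimpleGraph V) (M : G.Subgraph) : ℕ :=
  sInf {n | ∃ S : Set (Sym2 V), G.IsForcingSet M S ∧ S.ncard = n}

/-- The anti-forcing number `af(G,M)`. -/
noncomputable def SimpleGraph.antiForcingNum (G : SimpleGraph V) (M : G.Subgraph) : ℕ :=
  sInf {n | ∃ S : Set (Sym2 V), G.IsAntiForcingSet M S ∧ S.ncard = n}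

/-- Main auxiliary: if some color class has no pendant vertex, a second perfect matching exists. -/
theorem aux_second_matching (G : SimpleGraph V) [Fintype V]
    [Nonempty V] [DecidableRel G.Adj] (col : G.Coloring Bool)
    (M : G.Subgraph) (hM : M.IsPerfectMatching) (b : Bool)
    (hb : ∀ v, col v = b → G.degree v ≠ 1) :
    ∃ N : G.Subgraph, N.IsPerfectMatching ∧ N ≠ M := by
  classical
  have exU : ∀ v : V, ∃! w, M.Adj v w := fun v => hM.1 (hM.2 v)
  set f : V → V := fun v => (exU v).choose with hfdef
  have hf : ∀ v, M.Adj v (f v) := fun v => (exU v).choose_spec.1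
  have hfu : ∀ v w, M.Adj v w → w = f v := fun v w hw => (exU v).choose_spec.2 w hw
  have hff : ∀ v, f (f v) = v := fun v => (hfu (f v) v (hf v).symm).symm
  have hcolf : ∀ v, col (f v) = !col v := by
    intro v
    have h1 := (col.valid (M.adj_sub (hf v))).symm
    revert h1; cases col v <;> cases col (f v) <;> simp
  -- a second neighbor for vertices of color b
  have exg : ∀ v, col v = b → ∃ w, G.Adj v w ∧ w ≠ f v := by
    intro v hv
    by_contra hg
    push_neg at hg
    refine hb v hv ?_
    have hn : G.neighborFinset v = {f v} := by
      ext w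
      simp only [mem_neighborFinset, Finset.mem_singleton]
      constructor
      · exact hg w
      · rintro rfl; exact M.adj_sub (hf v)
    rw [← card_neighborFinset_eq_degree, hn]; simp
  set g : V → V := fun v => if hv : col v = b then (exg v hv).choose else v with hgdef
  have hg1 : ∀ v, col v = b → G.Adj v (g v) := by
    intro v hv
    simp only [hgdef, dif_pos hv]
    exact (exg v hv).choose_spec.1
  have hg2 : ∀ v, col v = b → g v ≠ f v := by
    intro v hv
    simp only [hgdef, dif_pos hv]
    exact (exg v hv).choose_spec.2
  have hcolg : ∀ v, col v = b → col (g v) = !b := by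
    intro v hv
    have := (col.valid (hg1 v hv)).symm
    rw [hv] at this
    cases b <;> revert this <;> cases col (g v) <;> simp
  set p : V → V := fun v => f (g v) with hpdef
  have hcolp : ∀ v, col v = b → col (p v) = b := by
    intro v hv
    show col (f (g v)) = b
    rw [hcolf, hcolg v hv, Bool.not_not]
  -- starting vertex of color b
  obtain ⟨v0⟩ : Nonempty V := inferInstance
  have hexa : ∃ a : V, col a = b := by
    by_cases h0 : col v0 = b
    · exact ⟨v0, h0⟩
    · refine ⟨f v0, ?_⟩
      rw [hcolf]
      revert h0; cases b <;> cases col v0 <;> simp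
  obtain ⟨a0, ha0⟩ := hexa
  have hiter0 : ∀ n, col (p^[n] a0) = b := by
    intro n
    induction n with
    | zero => simpa using ha0
    | succ n ih => rw [Function.iterate_succ_apply']; exact hcolp _ ih
  -- find a repeat
  obtain ⟨i, j, hij, heq⟩ : ∃ i j, i ≠ j ∧ p^[i] a0 = p^[j] a0 := by
    obtain ⟨i, j, hij, heq⟩ := Finite.exists_ne_map_eq_of_infinite (fun n : ℕ => p^[n] a0)
    exact ⟨i, j, hij, heq⟩
  wlog hlt : i < j generalizing i j
  · exact this j i hij.symm heq.symm (by omega)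
  set a : V := p^[i] a0 with hadef
  have hKne : (Set.Nonempty {m : ℕ | 0 < m ∧ p^[m] a = a}) := by
    refine ⟨j - i, by omega, ?_⟩
    rw [hadef, ← Function.iterate_add_apply]
    rw [show j - i + i = j by omega]
    exact heq.symm
  set k : ℕ := sInf {m : ℕ | 0 < m ∧ p^[m] a = a} with hkdef
  have hkmem : 0 < k ∧ p^[k] a = a := Nat.sInf_mem hKne
  have hkmin : ∀ m, 0 < m → m < k → p^[m] a ≠ a := by
    intro m hm hmk hma
    exact Nat.notMem_of_lt_sInf hmk ⟨hm, hma⟩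
  have hitera : ∀ n, col (p^[n] a) = b := by
    intro n
    rw [hadef, ← Function.iterate_add_apply]
    exact hiter0 _
  -- the cycle
  set C : Set V := {v | ∃ n < k, p^[n] a = v} with hCdef
  have haC : a ∈ C := ⟨0, hkmem.1, rfl⟩
  have hcolC : ∀ c ∈ C, col c = b := by rintro c ⟨n, _, rfl⟩; exact hitera n
  have hpC : ∀ c ∈ C, p c ∈ C := by
    rintro c ⟨n, hn, rfl⟩
    have e : p (p^[n] a) = p^[n+1] a := (Function.iterate_succ_apply' p n a).symm
    rw [e]
    rcases Nat.lt_or_ge (n+1) k with h' | h'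
    · exact ⟨n+1, h', rfl⟩
    · have e2 : n + 1 = k := by omega
      rw [e2, hkmem.2]; exact haC
  have hpsurj : ∀ c ∈ C, ∃ c' ∈ C, p c' = c := by
    rintro c ⟨n, hn, rfl⟩
    rcases Nat.eq_zero_or_pos n with rfl | hpos
    · refine ⟨p^[k-1] a, ⟨k-1, by omega, rfl⟩, ?_⟩
      have e : p (p^[k-1] a) = p^[k-1+1] a := (Function.iterate_succ_apply' p (k-1) a).symm
      rw [e, show k - 1 + 1 = k by omega, hkmem.2]
      rfl
    · refine ⟨p^[n-1] a, ⟨n-1, by omega, rfl⟩, ?_⟩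
      have e : p (p^[n-1] a) = p^[n-1+1] a := (Function.iterate_succ_apply' p (n-1) a).symm
      rw [e, show n - 1 + 1 = n by omega]
  have key : ∀ x y, x < y → y < k → p^[x] a ≠ p^[y] a := by
    intro x y h1 h2 hxy
    have h3 : p^[(k - y) + x] a = a := by
      rw [Function.iterate_add_apply, hxy, ← Function.iterate_add_apply,
        show k - y + y = k by omega, hkmem.2]
    exact hkmin _ (by omega) (by omega) h3
  have hinj : ∀ x ∈ Finset.range k, ∀ y ∈ Finset.range k, p^[x] a = p^[y] a → x = y := by
    intro x hx y hy hxy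
    simp only [Finset.mem_range] at hx hy
    rcases lt_trichotomy x y with h' | h' | h'
    · exact absurd hxy (key x y h' hy)
    · exact h'
    · exact absurd hxy.symm (key y x h' hx)
  have hpinj : ∀ c ∈ C, ∀ c' ∈ C, p c = p c' → c = c' := by
    rintro c ⟨n, hn, rfl⟩ c' ⟨m, hm, rfl⟩ hcc
    have e1 : p (p^[n] a) = p^[n+1] a := (Function.iterate_succ_apply' p n a).symm
    have e2 : p (p^[m] a) = p^[m+1] a := (Function.iterate_succ_apply' p m a).symm
    rw [e1, e2] at hcc
    by_cases h1 : n + 1 = k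
    · by_cases h2 : m + 1 = k
      · congr 1; omega
      · rw [h1, hkmem.2] at hcc
        exact absurd (hinj 0 (by simp; omega) (m+1) (by simp; omega) hcc) (by omega)
    · by_cases h2 : m + 1 = k
      · rw [h2, hkmem.2] at hcc
        exact absurd (hinj (n+1) (by simp; omega) 0 (by simp; omega) hcc) (by omega)
      · have := hinj (n+1) (by simp; omega) (m+1) (by simp; omega) hcc
        congr 1; omega
  have hginj : ∀ c ∈ C, ∀ c' ∈ C, g c = g c' → c = c' := by
    intro c hc c' hc' hgg
    exact hpinj c hc c' hc' (by show f (g c) = f (g c'); rw [hgg])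
  have hbne : (b : Bool) ≠ !b := by cases b <;> simp
  have hCnotD : ∀ v ∈ C, f v ∉ C := by
    intro v hv hfv
    have h1 := hcolC v hv
    have h2 := hcolC _ hfv
    rw [hcolf, h1] at h2
    exact hbne h2.symm
  -- the new matching
  set N : G.Subgraph := {
    verts := Set.univ
    Adj := fun u v => (M.Adj u v ∧ u ∉ C ∧ v ∉ C) ∨
      (∃ c ∈ C, (u = c ∧ v = g c) ∨ (u = g c ∧ v = c))
    adj_sub := by
      rintro u v (⟨h1, _, _⟩ | ⟨c, hc, ⟨hu, hv⟩ | ⟨hu, hv⟩⟩)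
      · exact M.adj_sub h1
      · rw [hu, hv]; exact hg1 c (hcolC c hc)
      · rw [hu, hv]; exact (hg1 c (hcolC c hc)).symm
    edge_vert := fun _ => Set.mem_univ _
    symm := by
      constructor
      rintro u v (⟨h1, h2, h3⟩ | ⟨c, hc, ⟨hu, hv⟩ | ⟨hu, hv⟩⟩)
      · exact Or.inl ⟨h1.symm, h3, h2⟩
      · exact Or.inr ⟨c, hc, Or.inr ⟨hv, hu⟩⟩
      · exact Or.inr ⟨c, hc, Or.inl ⟨hv, hu⟩⟩ } with hNdef
  have hgC_notC : ∀ c ∈ C, g c ∉ C := by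
    intro c hc hgc
    have := hcolC _ hgc
    rw [hcolg c (hcolC c hc)] at this
    exact hbne this.symm
  have hNpm : N.IsPerfectMatching := by
    constructor
    · intro v _
      by_cases hvC : v ∈ C
      · -- v on the cycle: matched to g v
        refine ⟨g v, Or.inr ⟨v, hvC, Or.inl ⟨rfl, rfl⟩⟩, ?_⟩
        rintro w (⟨h1, h2, _⟩ | ⟨c, hc, ⟨hu, hv'⟩ | ⟨hu, hv'⟩⟩)
        · exact absurd hvC h2
        · rw [hv', hu]
        · exact absurd hvC (hu ▸ hgC_notC c hc)
      · by_cases hvD : f v ∈ C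
        · -- v = f c₀ for c₀ ∈ C : matched to the predecessor of c₀
          obtain ⟨c₁, hc₁, hpc₁⟩ := hpsurj (f v) hvD
          have hgc₁ : g c₁ = v := by
            have : f (g c₁) = f v := hpc₁
            have := congrArg f this
            rwa [hff, hff] at this
          refine ⟨c₁, Or.inr ⟨c₁, hc₁, Or.inr ⟨hgc₁.symm, rfl⟩⟩, ?_⟩
          rintro w (⟨h1, h2, h3⟩ | ⟨c, hc, ⟨hu, hv'⟩ | ⟨hu, hv'⟩⟩)
          · exfalso
            have := hfu v w h1
            rw [this] at h3
            exact h3 hvD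
          · exact absurd (hu ▸ hc) hvC
          · rw [hv']
            refine hginj c hc c₁ hc₁ ?_
            rw [← hu, hgc₁]
        · -- v off the cycle: matched to f v
          refine ⟨f v, Or.inl ⟨hf v, hvC, hvD⟩, ?_⟩
          rintro w (⟨h1, _, _⟩ | ⟨c, hc, ⟨hu, hv'⟩ | ⟨hu, hv'⟩⟩)
          · exact hfu v w h1
          · exact absurd (hu ▸ hc) hvC
          · exfalso
            refine hvD ?_
            have hfgc : f (g c) ∈ C := hpC c hc
            rw [hu]; exact hfgc
    · intro v; exact Set.mem_univ v
  refine ⟨N, hNpm, ?_⟩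
  intro hNM
  have hadj : N.Adj a (g a) := Or.inr ⟨a, haC, Or.inl ⟨rfl, rfl⟩⟩
  rw [hNM] at hadj
  exact hg2 a (by simpa using hitera 0) (hfu a (g a) hadj)

theorem unique_perfect_matching_pendant_vertices (G : SimpleGraph V) [Fintype V]
    [Nonempty V] [DecidableRel G.Adj] (col : G.Coloring Bool)
    (h : ∃! M : G.Subgraph, M.IsPerfectMatching) :
    ∃ u v : V, G.degree u = 1 ∧ G.degree v = 1 ∧ col u ≠ col v := by
  obtain ⟨M, hM, hUniq⟩ := h
  by_contra hcon
  push_neg at hcon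
  have hb : ∃ b : Bool, ∀ v, col v = b → G.degree v ≠ 1 := by
    by_cases hp : ∃ u, G.degree u = 1
    · obtain ⟨u, hu⟩ := hp
      refine ⟨!col u, fun v hv hdv => ?_⟩
      have := hcon u v hu hdv
      rw [hv] at this
      exact absurd this (by cases col u <;> simp)
    · push_neg at hp
      exact ⟨true, fun v _ => hp v⟩
  obtain ⟨b, hb⟩ := hb
  obtain ⟨N, hN, hNM⟩ := aux_second_matching G col M hM b hb
  exact hNM (hUniq N hN)
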